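/- arXiv:2304.12575 — 2 statements merged into one kernel-verified Lean document; each statement's English description precedes it below -/
import Mathlib

section
/- Let n ≥ 1 and let G be a real positive definite (2n+1)×(2n+1) matrix with det G = 1 satisfying J G⁻¹ J = G. If G = M D Mᵀ is a block Cholesky decomposition of G with block sizes (n,1,n) (M block lower triangular with identity diagonal blocks, D block diagonal with positive definite blocks), then there exist a positive definite symmetric n×n matrix Θ and a vector δ ∈ ℝⁿ such that D = diag(Θ, 1, Θ⁻¹) and M has block form [[Iₙ, 0, 0], [δᵀΘ⁻¹, 1, 0], [*, −Θ⁻¹δ, Iₙ]] where * denotes some n×n matrix. -/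
open Matrix

/-- Index type for `(2n+1)×(2n+1)` real matrices with block sizes `(n, 1, n)`. -/
abbrev Idx (n : ℕ) := (Fin n ⊕ Fin 1) ⊕ Fin n

/-- The `3×3`-block matrix with block sizes `(n,1,n)` and the given blocks. -/
def blk3 {n : ℕ} (A₁₁ : Matrix (Fin n) (Fin n) ℝ) (A₁₂ : Matrix (Fin n) (Fin 1) ℝ)
    (A₁₃ : Matrix (Fin n) (Fin n) ℝ) (A₂₁ : Matrix (Fin 1) (Fin n) ℝ)
    (A₂₂ : Matrix (Fin 1) (Fin 1) ℝ) (A₂₃ : Matrix (Fin 1) (Fin n) ℝ)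
    (A₃₁ : Matrix (Fin n) (Fin n) ℝ) (A₃₂ : Matrix (Fin n) (Fin 1) ℝ)
    (A₃₃ : Matrix (Fin n) (Fin n) ℝ) : Matrix (Idx n) (Idx n) ℝ :=
  Matrix.fromBlocks (Matrix.fromBlocks A₁₁ A₁₂ A₂₁ A₂₂) (Matrix.fromRows A₁₃ A₂₃)
    (Matrix.fromCols A₃₁ A₃₂) A₃₃

/-- The matrix `J = [[0,0,Iₙ],[0,1,0],[Iₙ,0,0]]` with block sizes `(n,1,n)`. -/
def Jmat (n : ℕ) : Matrix (Idx n) (Idx n) ℝ := blk3 0 0 1 0 1 0 1 0 0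

/-- The matrix `V = [[−A₀, a₀, 0], [a₀ᵀ, 0, −a₀ᵀ], [0, −a₀, A₀]]` with block sizes `(n,1,n)`. -/
def Vmat {n : ℕ} (A₀ : Matrix (Fin n) (Fin n) ℝ) (a₀ : Matrix (Fin n) (Fin 1) ℝ) :
    Matrix (Idx n) (Idx n) ℝ :=
  blk3 (-A₀) a₀ 0 a₀ᵀ 0 (-a₀ᵀ) 0 (-a₀) A₀

section Aux

variable {n : ℕ}

lemma blk3_mul (A₁₁ B₁₁ : Matrix (Fin n) (Fin n) ℝ) (A₁₂ B₁₂ : Matrix (Fin n) (Fin 1) ℝ)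
    (A₁₃ B₁₃ : Matrix (Fin n) (Fin n) ℝ) (A₂₁ B₂₁ : Matrix (Fin 1) (Fin n) ℝ)
    (A₂₂ B₂₂ : Matrix (Fin 1) (Fin 1) ℝ) (A₂₃ B₂₃ : Matrix (Fin 1) (Fin n) ℝ)
    (A₃₁ B₃₁ : Matrix (Fin n) (Fin n) ℝ) (A₃₂ B₃₂ : Matrix (Fin n) (Fin 1) ℝ)
    (A₃₃ B₃₃ : Matrix (Fin n) (Fin n) ℝ) :
    blk3 A₁₁ A₁₂ A₁₃ A₂₁ A₂₂ A₂₃ A₃₁ A₃₂ A₃₃ * blk3 B₁₁ B₁₂ B₁₃ B₂₁ B₂₂ B₂₃ B₃₁ B₃₂ B₃₃ =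
    blk3 (A₁₁*B₁₁ + A₁₂*B₂₁ + A₁₃*B₃₁) (A₁₁*B₁₂ + A₁₂*B₂₂ + A₁₃*B₃₂) (A₁₁*B₁₃ + A₁₂*B₂₃ + A₁₃*B₃₃)
         (A₂₁*B₁₁ + A₂₂*B₂₁ + A₂₃*B₃₁) (A₂₁*B₁₂ + A₂₂*B₂₂ + A₂₃*B₃₂) (A₂₁*B₁₃ + A₂₂*B₂₃ + A₂₃*B₃₃)
         (A₃₁*B₁₁ + A₃₂*B₂₁ + A₃₃*B₃₁) (A₃₁*B₁₂ + A₃₂*B₂₂ + A₃₃*B₃₂) (A₃₁*B₁₃ + A₃₂*B₂₃ + A₃₃*B₃₃) := by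
  ext i j
  rcases i with (i|i)|i <;> rcases j with (j|j)|j <;>
    simp [blk3, Matrix.mul_apply, Fintype.sum_sum_type, Finset.sum_add_distrib]

lemma blk3_transpose (A₁₁ : Matrix (Fin n) (Fin n) ℝ) (A₁₂ : Matrix (Fin n) (Fin 1) ℝ)
    (A₁₃ : Matrix (Fin n) (Fin n) ℝ) (A₂₁ : Matrix (Fin 1) (Fin n) ℝ)
    (A₂₂ : Matrix (Fin 1) (Fin 1) ℝ) (A₂₃ : Matrix (Fin 1) (Fin n) ℝ)
    (A₃₁ : Matrix (Fin n) (Fin n) ℝ) (A₃₂ : Matrix (Fin n) (Fin 1) ℝ)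
    (A₃₃ : Matrix (Fin n) (Fin n) ℝ) :
    (blk3 A₁₁ A₁₂ A₁₃ A₂₁ A₂₂ A₂₃ A₃₁ A₃₂ A₃₃)ᵀ =
    blk3 A₁₁ᵀ A₂₁ᵀ A₃₁ᵀ A₁₂ᵀ A₂₂ᵀ A₃₂ᵀ A₁₃ᵀ A₂₃ᵀ A₃₃ᵀ := by
  ext i j
  rcases i with (i|i)|i <;> rcases j with (j|j)|j <;> simp [blk3]

lemma blk3_one : (1 : Matrix (Idx n) (Idx n) ℝ) = blk3 1 0 0 0 1 0 0 0 1 := by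
  ext i j
  rcases i with (i|i)|i <;> rcases j with (j|j)|j <;>
    simp [blk3, Matrix.one_apply, Sum.inl.injEq, Sum.inr.injEq]

lemma blk3_congr {A₁₁ B₁₁ : Matrix (Fin n) (Fin n) ℝ} {A₁₂ B₁₂ : Matrix (Fin n) (Fin 1) ℝ}
    {A₁₃ B₁₃ : Matrix (Fin n) (Fin n) ℝ} {A₂₁ B₂₁ : Matrix (Fin 1) (Fin n) ℝ}
    {A₂₂ B₂₂ : Matrix (Fin 1) (Fin 1) ℝ} {A₂₃ B₂₃ : Matrix (Fin 1) (Fin n) ℝ}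
    {A₃₁ B₃₁ : Matrix (Fin n) (Fin n) ℝ} {A₃₂ B₃₂ : Matrix (Fin n) (Fin 1) ℝ}
    {A₃₃ B₃₃ : Matrix (Fin n) (Fin n) ℝ}
    (h₁₁ : A₁₁ = B₁₁) (h₁₂ : A₁₂ = B₁₂) (h₁₃ : A₁₃ = B₁₃)
    (h₂₁ : A₂₁ = B₂₁) (h₂₂ : A₂₂ = B₂₂) (h₂₃ : A₂₃ = B₂₃)
    (h₃₁ : A₃₁ = B₃₁) (h₃₂ : A₃₂ = B₃₂) (h₃₃ : A₃₃ = B₃₃) :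
    blk3 A₁₁ A₁₂ A₁₃ A₂₁ A₂₂ A₂₃ A₃₁ A₃₂ A₃₃ = blk3 B₁₁ B₁₂ B₁₃ B₂₁ B₂₂ B₂₃ B₃₁ B₃₂ B₃₃ := by
  subst h₁₁ h₁₂ h₁₃ h₂₁ h₂₂ h₂₃ h₃₁ h₃₂ h₃₃; rfl

lemma blk3_inj {A₁₁ B₁₁ : Matrix (Fin n) (Fin n) ℝ} {A₁₂ B₁₂ : Matrix (Fin n) (Fin 1) ℝ}
    {A₁₃ B₁₃ : Matrix (Fin n) (Fin n) ℝ} {A₂₁ B₂₁ : Matrix (Fin 1) (Fin n) ℝ}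
    {A₂₂ B₂₂ : Matrix (Fin 1) (Fin 1) ℝ} {A₂₃ B₂₃ : Matrix (Fin 1) (Fin n) ℝ}
    {A₃₁ B₃₁ : Matrix (Fin n) (Fin n) ℝ} {A₃₂ B₃₂ : Matrix (Fin n) (Fin 1) ℝ}
    {A₃₃ B₃₃ : Matrix (Fin n) (Fin n) ℝ}
    (h : blk3 A₁₁ A₁₂ A₁₃ A₂₁ A₂₂ A₂₃ A₃₁ A₃₂ A₃₃ = blk3 B₁₁ B₁₂ B₁₃ B₂₁ B₂₂ B₂₃ B₃₁ B₃₂ B₃₃) :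
    A₁₁ = B₁₁ ∧ A₁₂ = B₁₂ ∧ A₁₃ = B₁₃ ∧ A₂₁ = B₂₁ ∧ A₂₂ = B₂₂ ∧ A₂₃ = B₂₃ ∧
    A₃₁ = B₃₁ ∧ A₃₂ = B₃₂ ∧ A₃₃ = B₃₃ := by
  refine ⟨?_, ?_, ?_, ?_, ?_, ?_, ?_, ?_, ?_⟩ <;> ext i j
  · simpa [blk3] using congrFun (congrFun h (Sum.inl (Sum.inl i))) (Sum.inl (Sum.inl j))
  · simpa [blk3] using congrFun (congrFun h (Sum.inl (Sum.inl i))) (Sum.inl (Sum.inr j))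
  · simpa [blk3] using congrFun (congrFun h (Sum.inl (Sum.inl i))) (Sum.inr j)
  · simpa [blk3] using congrFun (congrFun h (Sum.inl (Sum.inr i))) (Sum.inl (Sum.inl j))
  · simpa [blk3] using congrFun (congrFun h (Sum.inl (Sum.inr i))) (Sum.inl (Sum.inr j))
  · simpa [blk3] using congrFun (congrFun h (Sum.inl (Sum.inr i))) (Sum.inr j)
  · simpa [blk3] using congrFun (congrFun h (Sum.inr i)) (Sum.inl (Sum.inl j))
  · simpa [blk3] using congrFun (congrFun h (Sum.inr i)) (Sum.inl (Sum.inr j))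
  · simpa [blk3] using congrFun (congrFun h (Sum.inr i)) (Sum.inr j)

lemma JJ : Jmat n * Jmat n = 1 := by
  unfold Jmat
  rw [blk3_mul, blk3_one]
  apply blk3_congr <;> simp

end Aux

/-- If `G ∈ Sym⁺₁(2n+1)` satisfies `J G⁻¹ J = G` and `G = M D Mᵀ` is a block
Cholesky decomposition with block sizes `(n,1,n)`, then `D = diag(Θ, 1, Θ⁻¹)` and
`M = [[Iₙ, 0, 0], [δᵀΘ⁻¹, 1, 0], [∗, −Θ⁻¹δ, Iₙ]]` for some `Θ ∈ Sym⁺(n)` and `δ ∈ ℝⁿ`. -/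
theorem stmt0 (n : ℕ) (hn : 1 ≤ n) (G M D : Matrix (Idx n) (Idx n) ℝ)
    (hGpd : G.PosDef) (hGdet : G.det = 1)
    (hGJ : Jmat n * G⁻¹ * Jmat n = G)
    (hM : ∃ (m₂₁ : Matrix (Fin 1) (Fin n) ℝ) (m₃₁ : Matrix (Fin n) (Fin n) ℝ)
      (m₃₂ : Matrix (Fin n) (Fin 1) ℝ), M = blk3 1 0 0 m₂₁ 1 0 m₃₁ m₃₂ 1)
    (hD : ∃ (D₁ : Matrix (Fin n) (Fin n) ℝ) (D₂ : Matrix (Fin 1) (Fin 1) ℝ)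
      (D₃ : Matrix (Fin n) (Fin n) ℝ), D₁.PosDef ∧ D₂.PosDef ∧ D₃.PosDef ∧
      D = blk3 D₁ 0 0 0 D₂ 0 0 0 D₃)
    (hChol : G = M * D * Mᵀ) :
    ∃ (Θ : Matrix (Fin n) (Fin n) ℝ) (δ : Matrix (Fin n) (Fin 1) ℝ),
      Θ.PosDef ∧ Θᵀ = Θ ∧ D = blk3 Θ 0 0 0 1 0 0 0 Θ⁻¹ ∧
      ∃ star : Matrix (Fin n) (Fin n) ℝ,
        M = blk3 1 0 0 (δᵀ * Θ⁻¹) 1 0 star (-(Θ⁻¹ * δ)) 1 := by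
  obtain ⟨b, c, d, hMeq⟩ := hM
  obtain ⟨D₁, D₂, D₃, hD₁, hD₂, hD₃, hDeq⟩ := hD
  have hGu : IsUnit G.det := by rw [hGdet]; exact isUnit_one
  -- G * J * G * J = 1
  have h1 : G * Jmat n * G * Jmat n = 1 := by
    rw [show G * Jmat n * G * Jmat n = G * Jmat n * (Jmat n * G⁻¹ * Jmat n) * Jmat n from by
      rw [hGJ]]
    rw [show G * Jmat n * (Jmat n * G⁻¹ * Jmat n) * Jmat n
        = G * (Jmat n * Jmat n) * G⁻¹ * (Jmat n * Jmat n) from by simp only [Matrix.mul_assoc]]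
    rw [JJ, Matrix.mul_one, Matrix.mul_one, Matrix.mul_nonsing_inv _ hGu]
  -- explicit inverse of M
  set N : Matrix (Idx n) (Idx n) ℝ := blk3 1 0 0 (-b) 1 0 (d*b - c) (-d) 1 with hN
  have hMN : M * N = 1 := by
    rw [hMeq, hN, blk3_mul, blk3_one]
    apply blk3_congr <;> (simp [Matrix.mul_neg, Matrix.mul_sub]; try abel)
  have hNM : N * M = 1 := mul_eq_one_comm.mp hMN
  have hMtNt : Mᵀ * Nᵀ = 1 := by rw [← Matrix.transpose_mul, hNM, Matrix.transpose_one]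
  -- rewrite h1 using the Cholesky factorization
  rw [hChol] at h1
  -- key identity : S D S D = 1 with S = Mᵀ J M
  have ha : M*D*Mᵀ*Jmat n*(M*D) = Jmat n * Nᵀ := by
    have hxy : (Mᵀ * Jmat n) * (Jmat n * Nᵀ) = 1 := by
      rw [show (Mᵀ * Jmat n) * (Jmat n * Nᵀ) = Mᵀ * (Jmat n * Jmat n) * Nᵀ from by
        simp only [Matrix.mul_assoc], JJ, Matrix.mul_one, hMtNt]
    have hax : (M*D*Mᵀ*Jmat n*(M*D)) * (Mᵀ * Jmat n) = 1 := by
      rw [show (M*D*Mᵀ*Jmat n*(M*D)) * (Mᵀ * Jmat n) = M*D*Mᵀ*Jmat n*(M*D*Mᵀ)*Jmat n from by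
        simp only [Matrix.mul_assoc]]
      exact h1
    calc M*D*Mᵀ*Jmat n*(M*D)
        = (M*D*Mᵀ*Jmat n*(M*D)) * ((Mᵀ * Jmat n) * (Jmat n * Nᵀ)) := by
          rw [hxy, Matrix.mul_one]
      _ = ((M*D*Mᵀ*Jmat n*(M*D)) * (Mᵀ * Jmat n)) * (Jmat n * Nᵀ) := by
          simp only [Matrix.mul_assoc]
      _ = Jmat n * Nᵀ := by rw [hax, Matrix.one_mul]
  have key : (Mᵀ * Jmat n * M) * D * ((Mᵀ * Jmat n * M) * D) = 1 := by
    calc (Mᵀ * Jmat n * M) * D * ((Mᵀ * Jmat n * M) * D)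
        = Mᵀ * Jmat n * (M*D*Mᵀ*Jmat n*(M*D)) := by simp only [Matrix.mul_assoc]
      _ = Mᵀ * Jmat n * (Jmat n * Nᵀ) := by rw [ha]
      _ = Mᵀ * (Jmat n * Jmat n) * Nᵀ := by simp only [Matrix.mul_assoc]
      _ = 1 := by rw [JJ, Matrix.mul_one, hMtNt]
  -- compute S = Mᵀ J M in block form
  have hS : Mᵀ * Jmat n * M = blk3 (cᵀ + bᵀ*b + c) (bᵀ + d) 1 (dᵀ + b) 1 0 1 0 0 := by
    rw [hMeq, blk3_transpose]
    unfold Jmat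
    rw [blk3_mul, blk3_mul]
    simp only [Matrix.transpose_one, Matrix.transpose_zero]
    apply blk3_congr <;> (simp [Matrix.mul_assoc]; try abel)
  have hSD : blk3 (cᵀ + bᵀ*b + c) (bᵀ + d) 1 (dᵀ + b) 1 0 1 0 0 * D =
      blk3 ((cᵀ + bᵀ*b + c)*D₁) ((bᵀ + d)*D₂) D₃ ((dᵀ + b)*D₁) D₂ 0 D₁ 0 0 := by
    rw [hDeq, blk3_mul]
    apply blk3_congr <;> simp
  rw [hS, hSD, blk3_mul, blk3_one] at key
  obtain ⟨e11, e12, e13, e21, e22, e23, e31, e32, e33⟩ := blk3_inj key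
  -- clean up the needed equations
  have hD₁u : IsUnit D₁.det := isUnit_iff_ne_zero.mpr hD₁.det_pos.ne'
  have hD₂u : IsUnit D₂.det := isUnit_iff_ne_zero.mpr hD₂.det_pos.ne'
  have e32' : D₁ * ((bᵀ + d) * D₂) = 0 := by simpa using e32
  have e33' : D₁ * D₃ = 1 := by simpa using e33
  have hf : bᵀ + d = 0 := by
    have h5 : (bᵀ + d) * D₂ = 0 := by
      calc (bᵀ + d) * D₂ = D₁⁻¹ * (D₁ * ((bᵀ + d) * D₂)) := by
            rw [← Matrix.mul_assoc, Matrix.nonsing_inv_mul _ hD₁u, Matrix.one_mul]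
        _ = 0 := by rw [e32', Matrix.mul_zero]
    calc bᵀ + d = (bᵀ + d) * D₂ * D₂⁻¹ := by
          rw [Matrix.mul_assoc, Matrix.mul_nonsing_inv _ hD₂u, Matrix.mul_one]
      _ = 0 := by rw [h5, Matrix.zero_mul]
  have hd : d = -bᵀ := eq_neg_of_add_eq_zero_right hf
  have e22' : D₂ * D₂ = 1 := by
    rw [hf] at e22
    simpa using e22
  have hD₂1 : D₂ = 1 := by
    have hx : 0 < D₂ 0 0 := by
      have := hD₂.det_pos
      rwa [Matrix.det_fin_one] at this
    have hxx : D₂ 0 0 * D₂ 0 0 = 1 := by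
      simpa [Matrix.mul_apply, Fin.sum_univ_one] using congrFun (congrFun e22' 0) 0
    have hone : D₂ 0 0 = 1 := by nlinarith
    ext i j
    fin_cases i
    fin_cases j
    simpa using hone
  have hsym : D₁ᵀ = D₁ := by
    have := hD₁.1
    rwa [Matrix.IsHermitian, conjTranspose_eq_transpose_of_trivial] at this
  have hD₃eq : D₁⁻¹ = D₃ := Matrix.inv_eq_right_inv e33'
  refine ⟨D₁, D₁ * bᵀ, hD₁, hsym, ?_, c, ?_⟩
  · rw [hDeq, hD₂1, hD₃eq]
  · rw [hMeq]
    apply blk3_congr rfl rfl rfl ?_ rfl rfl rfl ?_ rfl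
    · rw [Matrix.transpose_mul, Matrix.transpose_transpose, hsym, Matrix.mul_assoc,
        Matrix.mul_nonsing_inv _ hD₁u, Matrix.mul_one]
    · rw [hd, ← Matrix.mul_assoc, Matrix.nonsing_inv_mul _ hD₁u, Matrix.one_mul]
end

section
/- Let P₀ and Q₀ be real positive definite (2n+1)×(2n+1) matrices with det P₀ = det Q₀ = 1, and define sequences recursively by P_{k+1} = ½(P_k + Q_k) and Q_{k+1} = 2(P_k⁻¹ + Q_k⁻¹)⁻¹. Then both sequences (P_k) and (Q_k) converge to R₀ = P₀^{1/2}(P₀^{−1/2} Q₀ P₀^{−1/2})^{1/2} P₀^{1/2}, and R₀ is positive definite with det R₀ = 1. -/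
open Matrix

namespace AHM11

open Filter Topology
/-- Scalar arithmetic–harmonic mean recursion. -/
noncomputable def ahm (a : ℝ) : ℕ → ℝ × ℝ
  | 0 => (1, a)
  | (k+1) => (2⁻¹ * ((ahm a k).1 + (ahm a k).2), 2 * (((ahm a k).1)⁻¹ + ((ahm a k).2)⁻¹)⁻¹)

lemma ahm_prop {a : ℝ} (ha : 0 < a) (k : ℕ) :
    0 < (ahm a k).1 ∧ 0 < (ahm a k).2 ∧ (ahm a k).1 * (ahm a k).2 = a := by
  induction k with
  | zero => exact ⟨one_pos, ha, one_mul a⟩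
  | succ k ih =>
    obtain ⟨hp, hq, hpq⟩ := ih
    set p := (ahm a k).1
    set q := (ahm a k).2
    have hs : (0:ℝ) < p + q := by positivity
    have h1 : (0:ℝ) < p⁻¹ + q⁻¹ := by positivity
    refine ⟨by simp only [ahm]; positivity, by simp only [ahm]; positivity, ?_⟩
    simp only [ahm]
    rw [inv_add_inv hp.ne' hq.ne', inv_div]
    field_simp
    linear_combination ((ahm a k).1 + (ahm a k).2) * (hpq : (ahm a k).1 * (ahm a k).2 = a)

lemma am_hm {p q : ℝ} (hp : 0 < p) (hq : 0 < q) :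
    2 * (p⁻¹ + q⁻¹)⁻¹ ≤ 2⁻¹ * (p + q) := by
  have hs : (0:ℝ) < p + q := by positivity
  rw [inv_add_inv hp.ne' hq.ne', inv_div, ← mul_div_assoc, div_le_iff₀ hs]
  nlinarith [sq_nonneg (p - q)]

lemma ahm_dec {p q : ℝ} (hp : 0 < p) (hq : 0 < q) (hqp : q ≤ p) :
    2⁻¹ * (p + q) - 2 * (p⁻¹ + q⁻¹)⁻¹ ≤ 2⁻¹ * (p - q) := by
  have hs : (0:ℝ) < p + q := by positivity
  have key : 2⁻¹ * (p + q) - 2 * (p⁻¹ + q⁻¹)⁻¹ = (p - q)^2 / (2 * (p + q)) := by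
    rw [inv_add_inv hp.ne' hq.ne', inv_div]
    field_simp
    ring
  rw [key, div_le_iff₀ (by positivity)]
  nlinarith [sub_nonneg.mpr hqp, hq.le]

lemma ahm_tendsto {a : ℝ} (ha : 0 < a) :
    Tendsto (fun k => (ahm a k).1) atTop (nhds (Real.sqrt a)) ∧
    Tendsto (fun k => (ahm a k).2) atTop (nhds (Real.sqrt a)) := by
  set p : ℕ → ℝ := fun k => (ahm a k).1 with hpdef
  set q : ℕ → ℝ := fun k => (ahm a k).2 with hqdef
  have hp : ∀ k, 0 < p k := fun k => (ahm_prop ha k).1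
  have hq : ∀ k, 0 < q k := fun k => (ahm_prop ha k).2.1
  have hpq : ∀ k, p k * q k = a := fun k => (ahm_prop ha k).2.2
  have hstep1 : ∀ k, p (k+1) = 2⁻¹ * (p k + q k) := fun k => rfl
  have hstep2 : ∀ k, q (k+1) = 2 * ((p k)⁻¹ + (q k)⁻¹)⁻¹ := fun k => rfl
  have hord : ∀ k, q (k+1) ≤ p (k+1) := by
    intro k
    rw [hstep1, hstep2]
    exact am_hm (hp k) (hq k)
  -- √a is between q (k+1) and p (k+1)
  have hsand : ∀ k, q (k+1) ≤ Real.sqrt a ∧ Real.sqrt a ≤ p (k+1) := by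
    intro k
    have h1 : q (k+1) * q (k+1) ≤ p (k+1) * q (k+1) :=
      mul_le_mul_of_nonneg_right (hord k) (hq _).le
    have h2 : p (k+1) * q (k+1) ≤ p (k+1) * p (k+1) :=
      mul_le_mul_of_nonneg_left (hord k) (hp _).le
    constructor
    · calc q (k+1) = Real.sqrt (q (k+1) * q (k+1)) := (Real.sqrt_mul_self (hq _).le).symm
        _ ≤ Real.sqrt (p (k+1) * q (k+1)) := Real.sqrt_le_sqrt h1
        _ = Real.sqrt a := by rw [hpq]
    · calc Real.sqrt a = Real.sqrt (p (k+1) * q (k+1)) := by rw [hpq]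
        _ ≤ Real.sqrt (p (k+1) * p (k+1)) := Real.sqrt_le_sqrt h2
        _ = p (k+1) := Real.sqrt_mul_self (hp _).le
  have hgeom : ∀ k, p (k+1) - q (k+1) ≤ (p 1 - q 1) * 2⁻¹ ^ k := by
    intro k
    induction k with
    | zero => simp
    | succ k ih =>
      have : p (k+2) - q (k+2) ≤ 2⁻¹ * (p (k+1) - q (k+1)) := by
        rw [hstep1 (k+1), hstep2 (k+1)]
        exact ahm_dec (hp _) (hq _) (hord k)
      calc p (k+2) - q (k+2) ≤ 2⁻¹ * (p (k+1) - q (k+1)) := this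
        _ ≤ 2⁻¹ * ((p 1 - q 1) * 2⁻¹ ^ k) := by
            have := ih
            nlinarith
        _ = (p 1 - q 1) * 2⁻¹ ^ (k+1) := by ring
  have hD0 : Tendsto (fun k => p (k+1) - q (k+1)) atTop (nhds 0) := by
    apply squeeze_zero (fun k => sub_nonneg.mpr (hord k)) hgeom
    have := (tendsto_pow_atTop_nhds_zero_of_lt_one (by norm_num : (0:ℝ) ≤ 2⁻¹)
      (by norm_num : (2:ℝ)⁻¹ < 1)).const_mul (p 1 - q 1)
    simpa using this
  constructor
  · rw [← tendsto_add_atTop_iff_nat 1]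
    rw [← tendsto_sub_nhds_zero_iff]
    apply squeeze_zero_norm _ hD0
    intro k
    have h1 := (hsand k).1
    have h2 := (hsand k).2
    rw [Real.norm_eq_abs, abs_of_nonneg (sub_nonneg.mpr h2)]
    linarith
  · rw [← tendsto_add_atTop_iff_nat 1]
    rw [← tendsto_sub_nhds_zero_iff]
    apply squeeze_zero_norm _ hD0
    intro k
    have h1 := (hsand k).1
    have h2 := (hsand k).2
    rw [Real.norm_eq_abs, abs_of_nonpos (sub_nonpos.mpr h1), neg_sub]
    linarith

variable {m : Type*} [Fintype m] [DecidableEq m]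

lemma posDef_conj {A B : Matrix m m ℝ} (hA : A.PosDef) (hB : IsUnit B) :
    (Bᴴ * A * B).PosDef := by
  refine Matrix.PosDef.of_dotProduct_mulVec_pos (Matrix.isHermitian_conjTranspose_mul_mul B hA.1) fun x hx => ?_
  have hBx : B *ᵥ x ≠ 0 := by
    intro h
    exact hx (Matrix.mulVec_injective_iff_isUnit.mpr hB
      (h.trans (Matrix.mulVec_zero B).symm))
  simpa only [star_mulVec, Matrix.dotProduct_mulVec, Matrix.vecMul_vecMul]
    using hA.dotProduct_mulVec_pos hBx

/-- Conjugation of a diagonal matrix by a unitary. -/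
noncomputable def Phi (U : Matrix.unitaryGroup m ℝ) (c : m → ℝ) : Matrix m m ℝ :=
  (U : Matrix m m ℝ) * Matrix.diagonal c * star (U : Matrix m m ℝ)

variable (U : Matrix.unitaryGroup m ℝ)

lemma U_star_mul : star (U : Matrix m m ℝ) * (U : Matrix m m ℝ) = 1 :=
  Matrix.mem_unitaryGroup_iff'.mp U.2

lemma U_mul_star : (U : Matrix m m ℝ) * star (U : Matrix m m ℝ) = 1 :=
  Matrix.mem_unitaryGroup_iff.mp U.2

lemma Phi_mul (c c' : m → ℝ) : Phi U c * Phi U c' = Phi U (c * c') := by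
  simp only [Phi, Matrix.mul_assoc]
  rw [← Matrix.mul_assoc (star (U : Matrix m m ℝ)) (U : Matrix m m ℝ), U_star_mul,
    Matrix.one_mul, ← Matrix.mul_assoc (Matrix.diagonal c), Matrix.diagonal_mul_diagonal]
  rfl

lemma Phi_one : Phi U 1 = 1 := by
  have h1 : Matrix.diagonal (1 : m → ℝ) = 1 := Matrix.diagonal_one
  rw [Phi, h1, Matrix.mul_one, U_mul_star]

lemma Phi_add (c c' : m → ℝ) : Phi U (c + c') = Phi U c + Phi U c' := by
  have h : Matrix.diagonal (c + c') = Matrix.diagonal c + Matrix.diagonal c' :=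
    (Matrix.diagonal_add c c').symm
  rw [Phi, h, Matrix.mul_add, Matrix.add_mul]
  rfl

lemma Phi_smul (r : ℝ) (c : m → ℝ) : Phi U (r • c) = r • Phi U c := by
  have h : Matrix.diagonal (r • c) = r • Matrix.diagonal c := by
    funext i j
    by_cases hij : i = j <;> simp [Matrix.diagonal, hij]
  rw [Phi, h, mul_smul_comm, smul_mul_assoc]
  rfl

lemma Phi_inv {c : m → ℝ} (hc : ∀ i, c i ≠ 0) : (Phi U c)⁻¹ = Phi U c⁻¹ := by
  apply Matrix.inv_eq_right_inv
  rw [Phi_mul]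
  have : c * c⁻¹ = 1 := by
    funext i
    exact mul_inv_cancel₀ (hc i)
  rw [this, Phi_one]

lemma Phi_posDef {c : m → ℝ} (hc : ∀ i, 0 < c i) : (Phi U c).PosDef := by
  have hU : IsUnit (star (U : Matrix m m ℝ)) :=
    ⟨⟨star (U : Matrix m m ℝ), (U : Matrix m m ℝ), U_star_mul U, U_mul_star U⟩, rfl⟩
  have := posDef_conj (Matrix.posDef_diagonal_iff.mpr hc) hU
  simpa only [Phi, Matrix.star_eq_conjTranspose, Matrix.conjTranspose_conjTranspose] using this

lemma Phi_continuous : Continuous (Phi U) :=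
  (continuous_const.matrix_mul (continuous_id.matrix_diagonal)).matrix_mul continuous_const

/-- Spectral theorem over ℝ in `Phi` form. -/
lemma spectral_real {A : Matrix m m ℝ} (hA : A.IsHermitian) :
    A = Phi (hA.eigenvectorUnitary) hA.eigenvalues := by
  have h := hA.spectral_theorem
  have hco : (RCLike.ofReal ∘ hA.eigenvalues : m → ℝ) = hA.eigenvalues := by
    funext i
    simp [RCLike.ofReal_real_eq_id]
  rw [Phi, ← hco]
  exact h

end AHM11

open AHM11 Filter Topology in
/-- The AHM sequences both converge to the geodesic midpoint
`R₀ = P₀^{1/2}(P₀^{−1/2} Q₀ P₀^{−1/2})^{1/2} P₀^{1/2}`, which is positive definite with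
determinant one. (Here `Sq` is the positive definite square root of `P₀` and `T` that of
`P₀^{−1/2} Q₀ P₀^{−1/2} = Sq⁻¹ · Q₀ · Sq⁻¹`.) -/
theorem stmt11 (n : ℕ) (P Q : ℕ → Matrix (Idx n) (Idx n) ℝ)
    (hP0 : (P 0).PosDef) (hQ0 : (Q 0).PosDef)
    (hP0det : (P 0).det = 1) (hQ0det : (Q 0).det = 1)
    (hPrec : ∀ k, P (k + 1) = (2⁻¹ : ℝ) • (P k + Q k))
    (hQrec : ∀ k, Q (k + 1) = (2 : ℝ) • ((P k)⁻¹ + (Q k)⁻¹)⁻¹) :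
    ∃ R₀ : Matrix (Idx n) (Idx n) ℝ, R₀.PosDef ∧ R₀.det = 1 ∧
      (∃ Sq T : Matrix (Idx n) (Idx n) ℝ, Sq.PosDef ∧ Sq * Sq = P 0 ∧
        T.PosDef ∧ T * T = Sq⁻¹ * Q 0 * Sq⁻¹ ∧ R₀ = Sq * T * Sq) ∧
      Filter.Tendsto P Filter.atTop (nhds R₀) ∧
      Filter.Tendsto Q Filter.atTop (nhds R₀) := by
  classical
  -- the square root of P 0
  set U₀ := hP0.1.eigenvectorUnitary with hU₀def
  set e₀ := hP0.1.eigenvalues with he₀def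
  have he₀pos : ∀ i, 0 < e₀ i := hP0.eigenvalues_pos
  set Sq : Matrix (Idx n) (Idx n) ℝ := Phi U₀ (fun i => Real.sqrt (e₀ i)) with hSqdef
  have hSqPD : Sq.PosDef := Phi_posDef U₀ (fun i => Real.sqrt_pos.mpr (he₀pos i))
  have hSqsq : Sq * Sq = P 0 := by
    rw [hSqdef, Phi_mul]
    have h : (fun i => Real.sqrt (e₀ i)) * (fun i => Real.sqrt (e₀ i)) = e₀ := by
      funext i
      exact Real.mul_self_sqrt (he₀pos i).le
    rw [h]
    exact (spectral_real hP0.1).symm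
  have hSqdet : IsUnit Sq.det := hSqPD.det_pos.ne'.isUnit
  have hSqinv1 : Sq * Sq⁻¹ = 1 := Matrix.mul_nonsing_inv _ hSqdet
  have hSqinv2 : Sq⁻¹ * Sq = 1 := Matrix.nonsing_inv_mul _ hSqdet
  -- the conjugated matrix M and its spectral data
  set M : Matrix (Idx n) (Idx n) ℝ := Sq⁻¹ * Q 0 * Sq⁻¹ with hMdef
  have hMPD : M.PosDef := by
    have hinv : (Sq⁻¹)ᴴ = Sq⁻¹ := by
      rw [Matrix.conjTranspose_nonsing_inv, hSqPD.1.eq]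
    have := posDef_conj hQ0 hSqPD.inv.isUnit
    rwa [hinv] at this
  set U := hMPD.1.eigenvectorUnitary with hUdef
  set d := hMPD.1.eigenvalues with hddef
  have hdpos : ∀ i, 0 < d i := hMPD.eigenvalues_pos
  have hMspec : M = Phi U d := spectral_real hMPD.1
  -- the limit matrix
  set T : Matrix (Idx n) (Idx n) ℝ := Phi U (fun i => Real.sqrt (d i)) with hTdef
  have hTPD : T.PosDef := Phi_posDef U (fun i => Real.sqrt_pos.mpr (hdpos i))
  have hTsq : T * T = Sq⁻¹ * Q 0 * Sq⁻¹ := by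
    rw [hTdef, Phi_mul]
    have h : (fun i => Real.sqrt (d i)) * (fun i => Real.sqrt (d i)) = d := by
      funext i
      exact Real.mul_self_sqrt (hdpos i).le
    rw [h, ← hMspec]
  -- the key induction
  have key : ∀ k, P k = Sq * Phi U (fun i => (ahm (d i) k).1) * Sq ∧
      Q k = Sq * Phi U (fun i => (ahm (d i) k).2) * Sq := by
    intro k
    induction k with
    | zero =>
      constructor
      · have h1 : (fun i : Idx n => (ahm (d i) 0).1) = (1 : Idx n → ℝ) := rfl
        rw [h1, Phi_one, Matrix.mul_one, hSqsq]
      · have h2 : (fun i : Idx n => (ahm (d i) 0).2) = d := rfl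
        rw [h2, ← hMspec, hMdef]
        simp only [Matrix.mul_assoc]
        rw [hSqinv2, Matrix.mul_one, ← Matrix.mul_assoc, hSqinv1, Matrix.one_mul]
    | succ k ih =>
      obtain ⟨ihP, ihQ⟩ := ih
      set f : Idx n → ℝ := fun i => (ahm (d i) k).1 with hfdef
      set g : Idx n → ℝ := fun i => (ahm (d i) k).2 with hgdef
      have hfpos : ∀ i, 0 < f i := fun i => (ahm_prop (hdpos i) k).1
      have hgpos : ∀ i, 0 < g i := fun i => (ahm_prop (hdpos i) k).2.1
      have hsum_ne : ∀ i, (f⁻¹ + g⁻¹) i ≠ 0 := by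
        intro i
        have h1 := hfpos i
        have h2 := hgpos i
        have h3 : (0:ℝ) < (f i)⁻¹ + (g i)⁻¹ := by positivity
        simpa using h3.ne'
      constructor
      · rw [hPrec k, ihP, ihQ, ← Matrix.add_mul, ← Matrix.mul_add, ← Phi_add,
          ← smul_mul_assoc, ← mul_smul_comm, ← Phi_smul]
        congr 2
      · rw [hQrec k, ihP, ihQ, Matrix.mul_inv_rev, Matrix.mul_inv_rev, Matrix.mul_inv_rev,
          Matrix.mul_inv_rev, Phi_inv U (fun i => (hfpos i).ne'),
          Phi_inv U (fun i => (hgpos i).ne'),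
          ← Matrix.mul_add, ← Matrix.add_mul, ← Phi_add,
          ← Matrix.mul_assoc, Matrix.mul_inv_rev, Matrix.mul_inv_rev,
          Matrix.nonsing_inv_nonsing_inv _ hSqdet, Phi_inv U hsum_ne,
          ← Matrix.mul_assoc, ← smul_mul_assoc, ← mul_smul_comm, ← Phi_smul]
        congr 2
  -- determinant computations
  have hSqdet1 : Sq.det = 1 := by
    have h := congrArg Matrix.det hSqsq
    rw [Matrix.det_mul, hP0det] at h
    rcases mul_self_eq_one_iff.mp h with h1 | h1
    · exact h1
    · exfalso; have := hSqPD.det_pos; rw [h1] at this; linarith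
  have hTdet1 : T.det = 1 := by
    have h := congrArg Matrix.det hTsq
    rw [Matrix.det_mul, Matrix.det_mul, Matrix.det_mul, Matrix.det_nonsing_inv, hSqdet1,
      hQ0det] at h
    simp at h
    rcases mul_self_eq_one_iff.mp h with h1 | h1
    · exact h1
    · exfalso; have := hTPD.det_pos; rw [h1] at this; linarith
  -- convergence
  have hlimP : Tendsto P atTop (nhds (Sq * T * Sq)) := by
    have hPeq : P = fun k => Sq * Phi U (fun i => (ahm (d i) k).1) * Sq :=
      funext fun k => (key k).1
    rw [hPeq]
    have hc : Continuous fun c : Idx n → ℝ => Sq * Phi U c * Sq :=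
      (continuous_const.matrix_mul (Phi_continuous U)).matrix_mul continuous_const
    have hfv : Tendsto (fun k (i : Idx n) => (ahm (d i) k).1) atTop
        (nhds (fun i => Real.sqrt (d i))) :=
      tendsto_pi_nhds.mpr fun i => (ahm_tendsto (hdpos i)).1
    exact ((hc.tendsto _).comp hfv :)
  have hlimQ : Tendsto Q atTop (nhds (Sq * T * Sq)) := by
    have hQeq : Q = fun k => Sq * Phi U (fun i => (ahm (d i) k).2) * Sq :=
      funext fun k => (key k).2
    rw [hQeq]
    have hc : Continuous fun c : Idx n → ℝ => Sq * Phi U c * Sq :=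
      (continuous_const.matrix_mul (Phi_continuous U)).matrix_mul continuous_const
    have hfv : Tendsto (fun k (i : Idx n) => (ahm (d i) k).2) atTop
        (nhds (fun i => Real.sqrt (d i))) :=
      tendsto_pi_nhds.mpr fun i => (ahm_tendsto (hdpos i)).2
    exact ((hc.tendsto _).comp hfv :)
  -- R₀ and its properties
  have hR0PD : (Sq * T * Sq).PosDef := by
    have := posDef_conj hTPD hSqPD.isUnit
    rwa [hSqPD.1.eq] at this
  have hR0det : (Sq * T * Sq).det = 1 := by
    rw [Matrix.det_mul, Matrix.det_mul, hSqdet1, hTdet1]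
    ring
  exact ⟨Sq * T * Sq, hR0PD, hR0det, ⟨Sq, T, hSqPD, hSqsq, hTPD, hTsq, rfl⟩, hlimP, hlimQ⟩
end
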